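/- Let d ≥ 1 and let Δ be a pure d-dimensional flag-no-square simplicial complex in which every (d−1)-dimensional face is contained in at least two facets. Then for every vertex v of Δ, the total number of vertices of Δ satisfies f_0(Δ) ≥ f_{d−1}(lk_Δ v) + f_0(lk_Δ v) + 1. (Equivalently, for each facet F of lk_Δ v there is a vertex w outside the star of v with F ∪ {w} ∈ Δ, and any such assignment F ↦ w is injective.) -/

import Mathlib

open Finset

variable {V : Type} [DecidableEq V] [Fintype V]

/-- `K` is (the set of faces of) an abstract simplicial complex on `V`:
nonempty (contains the empty face) and closed under taking subsets. -/
def IsComplex (K : Finset (Finset V)) : Prop :=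
  ∅ ∈ K ∧ ∀ σ ∈ K, ∀ τ ⊆ σ, τ ∈ K

/-- The facets (maximal faces) of `K`. -/
def facets (K : Finset (Finset V)) : Finset (Finset V) :=
  K.filter fun σ => ∀ τ ∈ K, σ ⊆ τ → τ = σ

/-- `K` is pure `d`-dimensional: every facet has `d + 1` vertices. -/
def IsPure (K : Finset (Finset V)) (d : ℕ) : Prop :=
  ∀ σ ∈ facets K, σ.card = d + 1

/-- `fNum K i` is the number of `i`-dimensional faces (faces with `i + 1` vertices). -/
def fNum (K : Finset (Finset V)) (i : ℕ) : ℕ :=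
  (K.filter fun σ => σ.card = i + 1).card

/-- `K` is flag: every set of vertices of `K` that are pairwise joined by
edges of `K` is a face of `K`. -/
def IsFlag (K : Finset (Finset V)) : Prop :=
  ∀ τ : Finset V, (∀ v ∈ τ, ({v} : Finset V) ∈ K) →
    (∀ u ∈ τ, ∀ w ∈ τ, u ≠ w → ({u, w} : Finset V) ∈ K) → τ ∈ K

/-- `K` has no induced 4-cycle: there are no four distinct vertices `a b c d`
with `ab, bc, cd, da` faces and `ac, bd` non-faces. -/
def NoSquare (K : Finset (Finset V)) : Prop :=
  ¬ ∃ a b c d : V, ({a, b, c, d} : Finset V).card = 4 ∧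
    ({a, b} : Finset V) ∈ K ∧ ({b, c} : Finset V) ∈ K ∧
    ({c, d} : Finset V) ∈ K ∧ ({d, a} : Finset V) ∈ K ∧
    ({a, c} : Finset V) ∉ K ∧ ({b, d} : Finset V) ∉ K

/-- Every face with `d` vertices (i.e. of dimension `d - 1`) is contained in
at least two facets. -/
def NoFree (K : Finset (Finset V)) (d : ℕ) : Prop :=
  ∀ σ ∈ K, σ.card = d → 2 ≤ ((facets K).filter fun F => σ ⊆ F).card

/-- The link of a face `σ`. -/
def link (K : Finset (Finset V)) (σ : Finset V) : Finset (Finset V) :=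
  K.filter fun τ => τ ∩ σ = ∅ ∧ τ ∪ σ ∈ K

/-- Any pair of vertices of a face is a face. -/
lemma pair_mem_of_mem {K : Finset (Finset V)} (hK : IsComplex K) {σ : Finset V} (hσ : σ ∈ K)
    {u w : V} (hu : u ∈ σ) (hw : w ∈ σ) : ({u, w} : Finset V) ∈ K :=
  hK.2 σ hσ _ (Finset.insert_subset hu (Finset.singleton_subset_iff.mpr hw))

/-- In a pure `d`-dimensional complex, every face has at most `d+1` vertices. -/
lemma face_card_le {K : Finset (Finset V)} {d : ℕ} (hpure : IsPure K d)
    {σ : Finset V} (hσ : σ ∈ K) : σ.card ≤ d + 1 := by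
  obtain ⟨τ, hτ, hmax⟩ : ∃ τ ∈ (K.filter fun τ => σ ⊆ τ),
      ∀ x ∈ (K.filter fun τ => σ ⊆ τ), ¬ τ < x := by
    obtain ⟨τ, hτ⟩ := Finset.exists_maximal (s := K.filter fun τ => σ ⊆ τ)
      ⟨σ, Finset.mem_filter.mpr ⟨hσ, Finset.Subset.refl σ⟩⟩
    exact ⟨τ, hτ.1, fun x hx hlt => lt_irrefl _ (hlt.trans_le (hτ.2 hx hlt.le))⟩
  rw [Finset.mem_filter] at hτ
  have hfacet : τ ∈ facets K := by
    rw [facets, Finset.mem_filter]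
    refine ⟨hτ.1, fun ρ hρ hsub => ?_⟩
    by_contra hne
    exact hmax ρ (Finset.mem_filter.mpr ⟨hρ, hτ.2.trans hsub⟩)
      (Finset.ssubset_iff_subset_ne.mpr ⟨hsub, fun h => hne (h ▸ rfl)⟩)
  calc σ.card ≤ τ.card := Finset.card_le_card hτ.2
    _ = d + 1 := hpure τ hfacet

/-- A face with `d+1` vertices in a pure `d`-dimensional complex is a facet. -/
lemma facet_of_card {K : Finset (Finset V)} {d : ℕ} (hpure : IsPure K d)
    {σ : Finset V} (hσ : σ ∈ K) (hc : σ.card = d + 1) : σ ∈ facets K := by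
  rw [facets, Finset.mem_filter]
  exact ⟨hσ, fun ρ hρ hsub =>
    (Finset.eq_of_subset_of_card_le hsub (by rw [hc]; exact face_card_le hpure hρ)).symm⟩

/-- For every facet `F` of the link of `v` there is a vertex `w` outside the
star of `v` with `F ∪ {w}` a face. -/
lemma exists_w {K : Finset (Finset V)} {d : ℕ} (hK : IsComplex K)
    (hvert : ∀ u : V, ({u} : Finset V) ∈ K) (hpure : IsPure K d) (hflag : IsFlag K)
    (hfree : NoFree K d) (v : V) {F : Finset V} (hFL : F ∈ link K {v}) (hcard : F.card = d) :
    ∃ w, w ∉ F ∧ F ∪ {w} ∈ K ∧ ({v, w} : Finset V) ∉ K := by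
  rw [link, Finset.mem_filter] at hFL
  obtain ⟨hFK, hdisj, hFv⟩ := hFL
  have hvF : v ∉ F := by
    intro h
    exact (Finset.eq_empty_iff_forall_notMem.mp hdisj v) (by simp [h])
  have hFveq : F ∪ {v} = insert v F := by ext x; simp [or_comm]
  have hFvcard : (F ∪ {v}).card = d + 1 := by
    rw [hFveq, Finset.card_insert_of_notMem hvF, hcard]
  have hFvfacet : F ∪ {v} ∈ facets K := facet_of_card hpure hFv hFvcard
  have h2 := hfree F hFK hcard
  obtain ⟨G, hG, hGne⟩ := Finset.exists_mem_ne (lt_of_lt_of_le one_lt_two h2) (F ∪ {v})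
  rw [Finset.mem_filter] at hG
  obtain ⟨hGfacet, hFG⟩ := hG
  have hGK : G ∈ K := (Finset.mem_filter.mp hGfacet).1
  have hGcard : G.card = d + 1 := hpure G hGfacet
  have hGF1 : (G \ F).card = 1 := by
    rw [Finset.card_sdiff_of_subset hFG, hGcard, hcard]; omega
  obtain ⟨w, hw⟩ := Finset.card_eq_one.mp hGF1
  have hwGF : w ∈ G \ F := hw ▸ Finset.mem_singleton_self w
  have hwF : w ∉ F := (Finset.mem_sdiff.mp hwGF).2
  have hGeq : G = F ∪ {w} := by
    rw [← Finset.union_sdiff_of_subset hFG, hw]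
  have hFwK : F ∪ {w} ∈ K := hGeq ▸ hGK
  have hvw : v ≠ w := by
    rintro rfl
    exact hGne (by rw [hGeq])
  refine ⟨w, hwF, hFwK, ?_⟩
  intro hvwK
  have hτ : insert v (insert w F) ∈ K := by
    apply hflag _ (fun u _ => hvert u)
    intro u hu x hx hux
    simp only [Finset.mem_insert] at hu hx
    have hvmem : v ∈ F ∪ {v} := by simp
    have hwmem : w ∈ F ∪ {w} := by simp
    rcases hu with rfl | rfl | hu <;> rcases hx with rfl | rfl | hx
    · exact absurd rfl hux
    · exact hvwK
    · exact pair_mem_of_mem hK hFv hvmem (by simp [hx])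
    · rw [Finset.pair_comm]; exact hvwK
    · exact absurd rfl hux
    · exact pair_mem_of_mem hK hFwK hwmem (by simp [hx])
    · exact pair_mem_of_mem hK hFv (by simp [hu]) hvmem
    · exact pair_mem_of_mem hK hFwK (by simp [hu]) hwmem
    · exact pair_mem_of_mem hK hFK hu hx
  have hcard2 : (insert v (insert w F)).card = d + 2 := by
    rw [Finset.card_insert_of_notMem (by simp [hvw, hvF]),
      Finset.card_insert_of_notMem hwF, hcard]
  have := face_card_le hpure hτ
  omega

/-- The vertex `w` attached to a facet of the link determines the facet. -/
lemma w_uniq {K : Finset (Finset V)} {d : ℕ} (hK : IsComplex K)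
    (hvert : ∀ u : V, ({u} : Finset V) ∈ K) (hpure : IsPure K d) (hflag : IsFlag K) (hns : NoSquare K) (v : V)
    {F F' : Finset V} (hFL : F ∈ link K {v}) (hcF : F.card = d)
    (hF'L : F' ∈ link K {v}) (hcF' : F'.card = d)
    {w : V} (hwF : F ∪ {w} ∈ K) (hvwK : ({v, w} : Finset V) ∉ K)
    (hwF' : F' ∪ {w} ∈ K) : F = F' := by
  by_contra hne
  rw [link, Finset.mem_filter] at hFL hF'L
  obtain ⟨hFK, hdisjF, hFv⟩ := hFL
  obtain ⟨hF'K, hdisjF', hF'v⟩ := hF'L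
  have hvF : v ∉ F := by
    intro h; exact (Finset.eq_empty_iff_forall_notMem.mp hdisjF v) (by simp [h])
  have hvF' : v ∉ F' := by
    intro h; exact (Finset.eq_empty_iff_forall_notMem.mp hdisjF' v) (by simp [h])
  have hvmemF : v ∈ F ∪ {v} := by simp
  have hvmemF' : v ∈ F' ∪ {v} := by simp
  have hwmemF : w ∈ F ∪ {w} := by simp
  have hwmemF' : w ∈ F' ∪ {w} := by simp
  -- w is adjacent to no vertex of the star of v; in particular w ∉ F ∪ F'
  have hwnF : w ∉ F := by
    intro h
    exact hvwK (pair_mem_of_mem hK hFv hvmemF (by simp [h]))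
  have hwF2 : w ∉ F' := by
    intro h
    exact hvwK (pair_mem_of_mem hK hF'v hvmemF' (by simp [h]))
  by_cases hcross : ∀ a ∈ F, ∀ c ∈ F', a ≠ c → ({a, c} : Finset V) ∈ K
  · -- all cross edges present: F ∪ F' ∪ {w} would be a too-large face
    have hτ : insert w (F ∪ F') ∈ K := by
      apply hflag _ (fun u _ => hvert u)
      intro u hu x hx hux
      simp only [Finset.mem_insert, Finset.mem_union] at hu hx
      rcases hu with rfl | hu | hu <;> rcases hx with rfl | hx | hx
      · exact absurd rfl hux
      · exact pair_mem_of_mem hK hwF hwmemF (by simp [hx])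
      · exact pair_mem_of_mem hK hwF' hwmemF' (by simp [hx])
      · exact pair_mem_of_mem hK hwF (by simp [hu]) hwmemF
      · exact pair_mem_of_mem hK hFK hu hx
      · exact hcross u hu x hx hux
      · exact pair_mem_of_mem hK hwF' (by simp [hu]) hwmemF'
      · rw [Finset.pair_comm]; exact hcross x hx u hu hux.symm
      · exact pair_mem_of_mem hK hF'K hu hx
    have hssub : F ⊂ F ∪ F' := by
      refine Finset.ssubset_iff_subset_ne.mpr ⟨Finset.subset_union_left, ?_⟩
      intro h
      exact hne (Finset.eq_of_subset_of_card_le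
        (h ▸ Finset.subset_union_right) (by omega)).symm
    have h1 : d < (F ∪ F').card := hcF ▸ Finset.card_lt_card hssub
    have h2 : (insert w (F ∪ F')).card = (F ∪ F').card + 1 :=
      Finset.card_insert_of_notMem (by simp [hwnF, hwF2])
    have := face_card_le hpure hτ
    omega
  · -- a missing cross edge gives an induced square a - v - c - w
    push_neg at hcross
    obtain ⟨a, ha, c, hc, hac, hacK⟩ := hcross
    have haF' : a ∉ F' := fun h => hacK (pair_mem_of_mem hK hF'K h hc)
    have hcF2 : c ∉ F := fun h => hacK (pair_mem_of_mem hK hFK ha h)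
    have hav : a ≠ v := fun h => hvF (h ▸ ha)
    have hvc : v ≠ c := fun h => hvF' (h ▸ hc)
    have haw : a ≠ w := fun h => hwnF (h ▸ ha)
    have hcw : c ≠ w := fun h => hwF2 (h ▸ hc)
    have hvwne : v ≠ w := by
      rintro rfl
      exact hvwK (by simpa using hK.2 _ hFv _ (by simp))
    apply hns
    refine ⟨a, v, c, w, ?_, ?_, ?_, ?_, ?_, hacK, hvwK⟩
    · rw [Finset.card_insert_of_notMem (by simp [hav, hac, haw]),
        Finset.card_insert_of_notMem (by simp [hvc, hvwne]),
        Finset.card_insert_of_notMem (by simp [hcw]), Finset.card_singleton]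
    · exact pair_mem_of_mem hK hFv (by simp [ha]) hvmemF
    · exact pair_mem_of_mem hK hF'v hvmemF' (by simp [hc])
    · exact pair_mem_of_mem hK hwF' (by simp [hc]) hwmemF'
    · exact pair_mem_of_mem hK hwF hwmemF (by simp [ha])

/-- In a pure `d`-dimensional (`d ≥ 1`) flag-no-square simplicial complex with
no free `(d-1)`-faces, for every vertex `v` the number of vertices of the
complex is at least the number of facets of the link of `v`, plus the number of
vertices of the link of `v`, plus one. -/
theorem vertices_ge_link_facets_add_link_vertices {V : Type} [DecidableEq V] [Fintype V]
    (d : ℕ) (hd : 1 ≤ d) (K : Finset (Finset V))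
    (hK : IsComplex K) (hvert : ∀ v : V, ({v} : Finset V) ∈ K)
    (hpure : IsPure K d) (hflag : IsFlag K) (hns : NoSquare K)
    (hfree : NoFree K d) (v : V) :
    fNum (link K {v}) (d - 1) + fNum (link K {v}) 0 + 1 ≤ fNum K 0 := by
  classical
  have hNE : Nonempty V := ⟨v⟩
  set L := link K {v} with hLdef
  set T1 := L.filter (fun σ => σ.card = d) with hT1
  have hex : ∀ F ∈ T1, ∃ w, w ∉ F ∧ F ∪ {w} ∈ K ∧ ({v, w} : Finset V) ∉ K := by
    intro F hF
    rw [hT1, Finset.mem_filter] at hF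
    exact exists_w hK hvert hpure hflag hfree v hF.1 hF.2
  choose! wf hw1 hw2 hw3 using hex
  set W1 := T1.image wf with hW1
  set W2 := univ.filter (fun u => ({u} : Finset V) ∈ L) with hW2
  have hinj : Set.InjOn wf T1 := by
    intro F hF F' hF' heq
    have hF1 := Finset.mem_filter.mp hF
    have hF'1 := Finset.mem_filter.mp hF'
    exact w_uniq hK hvert hpure hflag hns v hF1.1 hF1.2 hF'1.1 hF'1.2
      (hw2 F hF) (hw3 F hF) (heq ▸ hw2 F' hF')
  have hdd : d - 1 + 1 = d := Nat.sub_add_cancel hd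
  have hcard1 : W1.card = fNum L (d - 1) := by
    rw [hW1, Finset.card_image_of_injOn hinj, fNum, hdd]
  have hcard2 : W2.card = fNum L 0 := by
    rw [fNum]
    apply Finset.card_bij (fun u _ => ({u} : Finset V))
    · intro u hu
      rw [hW2, Finset.mem_filter] at hu
      exact Finset.mem_filter.mpr ⟨hu.2, Finset.card_singleton u⟩
    · intro u _ x _ h
      exact Finset.singleton_inj.mp h
    · intro σ hσ
      rw [Finset.mem_filter] at hσ
      obtain ⟨u, rfl⟩ := Finset.card_eq_one.mp hσ.2
      exact ⟨u, Finset.mem_filter.mpr ⟨Finset.mem_univ u, hσ.1⟩, rfl⟩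
  have hK0 : fNum K 0 = Fintype.card V := by
    have heq : K.filter (fun σ => σ.card = 0 + 1) = univ.image (fun u => ({u} : Finset V)) := by
      ext σ
      simp only [Finset.mem_filter, Finset.mem_image, Finset.mem_univ, true_and]
      constructor
      · rintro ⟨hσ, hcard⟩
        obtain ⟨u, rfl⟩ := Finset.card_eq_one.mp hcard
        exact ⟨u, rfl⟩
      · rintro ⟨u, rfl⟩
        exact ⟨hvert u, Finset.card_singleton u⟩
    rw [fNum, heq, Finset.card_image_of_injective _ Finset.singleton_injective,
      Finset.card_univ]
  -- membership facts
  have hW1w : ∀ w' ∈ W1, ({v, w'} : Finset V) ∉ K := by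
    intro w' hw'
    rw [hW1, Finset.mem_image] at hw'
    obtain ⟨F, hF, rfl⟩ := hw'
    exact hw3 F hF
  have hW2w : ∀ u ∈ W2, ({v, u} : Finset V) ∈ K := by
    intro u hu
    rw [hW2, Finset.mem_filter, hLdef, link, Finset.mem_filter] at hu
    have : ({u} : Finset V) ∪ {v} ∈ K := hu.2.2.2
    have heq2 : ({u} : Finset V) ∪ {v} = {v, u} := by
      ext x; simp [or_comm]
    rwa [heq2] at this
  have hdisj12 : Disjoint W1 W2 := by
    rw [Finset.disjoint_left]
    intro x hx1 hx2
    exact hW1w x hx1 (hW2w x hx2)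
  have hvW1 : v ∉ W1 := by
    intro h
    apply hW1w v h
    simpa using hvert v
  have hvW2 : v ∉ W2 := by
    intro h
    rw [hW2, Finset.mem_filter, hLdef, link, Finset.mem_filter] at h
    have := h.2.2.1
    simp at this
  have hdisjv : Disjoint (W1 ∪ W2) ({v} : Finset V) := by
    rw [Finset.disjoint_singleton_right, Finset.mem_union]
    rintro (h | h)
    · exact hvW1 h
    · exact hvW2 h
  calc fNum L (d - 1) + fNum L 0 + 1
      = W1.card + W2.card + ({v} : Finset V).card := by
        rw [hcard1, hcard2, Finset.card_singleton]
    _ = (W1 ∪ W2 ∪ {v}).card := by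
        rw [Finset.card_union_of_disjoint hdisjv, Finset.card_union_of_disjoint hdisj12]
    _ ≤ Fintype.card V := by
        rw [← Finset.card_univ]
        exact Finset.card_le_card (Finset.subset_univ _)
    _ = fNum K 0 := hK0.symm
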